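/- Let σ(t) = 1/(1 + exp(−t)), let N > 0, γ > 0, δ > 0, T > 0, and let x : [0,T] → ℝ be differentiable with x(0) = 0 and x′(t) = exp(−Nδt/T)·(σ(γNt/T) − x(t)) for all t ∈ [0,T]. Define β(s) = (−1/(Nδ))·log(exp(−Nδ) − (Nδ/T)·log s) for s ∈ (0,1]. Then the function τ ↦ exp(−Nγ·β(τ)) is integrable on (0,1) and σ(Nγ) − x(T) < ∫₀¹ exp(−Nγ·β(τ)) dτ. -/

import Mathlib

open MeasureTheory

/-- The logistic sigmoid function σ(t) = 1/(1 + exp(−t)). -/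
noncomputable def logistic (t : ℝ) : ℝ := 1 / (1 + Real.exp (-t))

lemma logistic_lt_one (t : ℝ) : logistic t < 1 := by
  unfold logistic
  rw [div_lt_one (by positivity)]
  linarith [Real.exp_pos (-t)]

lemma one_sub_logistic_le (t : ℝ) : 1 - logistic t ≤ Real.exp (-t) := by
  unfold logistic
  have h : (0:ℝ) < 1 + Real.exp (-t) := by positivity
  have h1 : 1 - 1 / (1 + Real.exp (-t)) = Real.exp (-t) / (1 + Real.exp (-t)) := by
    field_simp
    ring
  rw [h1]
  exact div_le_self (Real.exp_pos _).le (by linarith [Real.exp_pos (-t)])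

lemma continuous_logistic : Continuous logistic := by
  unfold logistic
  exact continuous_const.div (by continuity) (fun x => by positivity)

set_option maxHeartbeats 1000000 in
/-- Equation (2) of the paper: for the annealed dynamics
x′(t) = exp(−Nδt/T)·(σ(γNt/T) − x(t)) with x(0) = 0, the function
τ ↦ exp(−Nγ·β(τ)) is integrable on (0,1) and the total variational distance
satisfies σ(Nγ) − x(T) < ∫₀¹ exp(−Nγ·β(τ)) dτ. -/
theorem stmt_10 (N γ δ T : ℝ) (hN : 0 < N) (hγ : 0 < γ) (hδ : 0 < δ) (hT : 0 < T)
    (x : ℝ → ℝ)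
    (hx0 : x 0 = 0)
    (hode : ∀ t ∈ Set.Icc (0:ℝ) T, HasDerivAt x
      (Real.exp (-(N * δ * t / T)) * (logistic (γ * N * t / T) - x t)) t)
    (β : ℝ → ℝ)
    (hβ : ∀ s ∈ Set.Ioc (0:ℝ) 1, β s =
      (-1 / (N * δ)) * Real.log (Real.exp (-(N * δ)) - (N * δ / T) * Real.log s)) :
    IntegrableOn (fun τ => Real.exp (-(N * γ * β τ))) (Set.Ioo (0:ℝ) 1) ∧
    logistic (N * γ) - x T <
      ∫ τ in Set.Ioo (0:ℝ) 1, Real.exp (-(N * γ * β τ)) := by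
  set m := N * δ with hm_def
  have hm : 0 < m := mul_pos hN hδ
  set k := N * γ with hk_def
  have hk : 0 < k := mul_pos hN hγ
  set g : ℝ → ℝ := fun τ => Real.exp (-(k * β τ)) with hg_def
  set f : ℝ → ℝ := fun t => Real.exp (-(m * t / T)) with hf_def
  set A : ℝ → ℝ := fun t => (T / m) * (1 - Real.exp (-(m * t / T))) with hA_def
  have hA0 : A 0 = 0 := by simp [hA_def]
  have hmTT : m * T / T = m := by field_simp
  have hAT : m / T * A T = 1 - Real.exp (-m) := by
    simp only [hA_def, hmTT]
    field_simp
  -- derivative of A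
  have hA : ∀ t, HasDerivAt A (f t) t := by
    intro t
    have h1 : HasDerivAt (fun t : ℝ => -(m * t / T)) (-(m / T)) t := by
      have h0 := (((hasDerivAt_id' t).const_mul m).div_const T).neg
      rw [mul_one] at h0
      exact h0
    have h2 := (h1.exp)
    have h3 := ((hasDerivAt_const t (1:ℝ)).sub h2).const_mul (T / m)
    refine HasDerivAt.congr_deriv (f := A) h3 ?_
    simp only [hf_def]
    field_simp
    ring
  -- continuity facts
  have hAcont : Continuous A := by
    apply continuous_const.mul
    exact continuous_const.sub (Real.continuous_exp.comp (((continuous_const.mul continuous_id).div_const T).neg))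
  have hfcont : Continuous f := Real.continuous_exp.comp (((continuous_const.mul continuous_id).div_const T).neg)
  have hEcont : Continuous (fun t => Real.exp (A t)) := Real.continuous_exp.comp hAcont
  -- FTC for the ODE
  have key1 : (∫ t in (0:ℝ)..T, Real.exp (A t) * f t * logistic (γ * N * t / T))
      = x T * Real.exp (A T) - x 0 * Real.exp (A 0) := by
    apply intervalIntegral.integral_eq_sub_of_hasDerivAt
    · intro t ht
      rw [Set.uIcc_of_le hT.le] at ht
      have hx := hode t ht
      have hE' : HasDerivAt (fun t => Real.exp (A t)) (Real.exp (A t) * f t) t := (hA t).exp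
      have := hx.mul hE'
      refine this.congr_deriv ?_
      ring
    · exact ((hEcont.mul hfcont).mul
        (continuous_logistic.comp ((continuous_const.mul continuous_id).div_const T))).intervalIntegrable _ _
  have key2 : (∫ t in (0:ℝ)..T, Real.exp (A t) * f t)
      = Real.exp (A T) - Real.exp (A 0) := by
    apply intervalIntegral.integral_eq_sub_of_hasDerivAt
    · intro t _; exact (hA t).exp
    · exact (hEcont.mul hfcont).intervalIntegrable _ _
  set τ₀ : ℝ := Real.exp (-(A T)) with hτ₀_def
  have hτ₀pos : 0 < τ₀ := Real.exp_pos _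
  have hATpos : 0 < A T := by
    have h1 : Real.exp (-m) < 1 := by rw [Real.exp_lt_one_iff]; linarith
    have h2 : 0 < m / T := by positivity
    nlinarith [hAT]
  have hτ₀lt1 : τ₀ < 1 := by
    rw [hτ₀_def, Real.exp_lt_one_iff]; linarith
  -- the explicit integrand on (0,1]
  have hgval : ∀ τ ∈ Set.Ioc (0:ℝ) 1,
      g τ = Real.exp ((k / m) * Real.log (Real.exp (-m) - m / T * Real.log τ)) := by
    intro τ hτ
    rw [hg_def]
    simp only
    rw [hβ τ hτ]
    congr 1
    field_simp
  -- continuity of g on (0,1]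
  have hgcont : ContinuousOn g (Set.Ioc (0:ℝ) 1) := by
    have harg : ∀ τ ∈ Set.Ioc (0:ℝ) 1, 0 < Real.exp (-m) - m / T * Real.log τ := by
      intro τ hτ
      have hlog : Real.log τ ≤ 0 := Real.log_nonpos hτ.1.le hτ.2
      have : m / T * Real.log τ ≤ 0 := mul_nonpos_of_nonneg_of_nonpos (by positivity) hlog
      linarith [Real.exp_pos (-m)]
    have hc : ContinuousOn (fun τ => Real.exp ((k / m) *
        Real.log (Real.exp (-m) - m / T * Real.log τ))) (Set.Ioc (0:ℝ) 1) := by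
      apply Real.continuous_exp.comp_continuousOn
      apply ContinuousOn.mul continuousOn_const
      apply ContinuousOn.log
      · exact ContinuousOn.sub continuousOn_const (ContinuousOn.mul continuousOn_const
          (Real.continuousOn_log.mono (fun τ hτ => ne_of_gt hτ.1)))
      · intro τ hτ; exact ne_of_gt (harg τ hτ)
    exact hc.congr hgval
  -- Part 1: integrability
  have hdom : ∀ τ ∈ Set.Ioo (0:ℝ) 1, ‖g τ‖ ≤
      Real.exp ((k/m) * (T/(2*(k/m)*m)) * Real.exp (-m) - (k/m) * Real.log (T/(2*(k/m)*m)))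
        * τ ^ (-(1/2) : ℝ) := by
    intro τ hτ
    set p := k / m with hp_def
    have hp : 0 < p := by positivity
    set ε := T / (2 * p * m) with hε_def
    have hε : 0 < ε := by positivity
    set L := Real.log τ with hL_def
    have hLneg : L < 0 := Real.log_neg hτ.1 hτ.2
    set y := Real.exp (-m) - m / T * L with hy_def
    have hy : 0 < y := by
      have : m / T * L < 0 := mul_neg_of_pos_of_neg (by positivity) hLneg
      simp only [hy_def]
      linarith [Real.exp_pos (-m)]
    have hval := hgval τ (Set.Ioo_subset_Ioc_self hτ)
    rw [hval, Real.norm_eq_abs, abs_of_pos (Real.exp_pos _)]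
    have hlogy : Real.log y ≤ ε * y - 1 - Real.log ε := by
      have h1 : Real.log (ε * y) ≤ ε * y - 1 := Real.log_le_sub_one_of_pos (by positivity)
      rw [Real.log_mul (ne_of_gt hε) (ne_of_gt hy)] at h1
      linarith
    have hpε : p * ε * (m / T) = 1 / 2 := by
      field_simp [hp_def, hε_def]
      rw [hε_def]
      field_simp
    have hexp : p * Real.log y ≤ p * ε * Real.exp (-m) - p * Real.log ε + (-(1/2)) * L := by
      have h2 : p * Real.log y ≤ p * (ε * y - 1 - Real.log ε) :=
        mul_le_mul_of_nonneg_left hlogy hp.le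
      have h3 : p * ε * y = p * ε * Real.exp (-m) - (p * ε * (m / T)) * L := by
        rw [hy_def]; ring
      rw [hpε] at h3
      have h4 : p * (ε * y - 1 - Real.log ε) = p * ε * y - p - p * Real.log ε := by ring
      rw [h4, h3] at h2
      linarith
    calc Real.exp (p * Real.log y) ≤ Real.exp (p * ε * Real.exp (-m) - p * Real.log ε
          + (-(1/2)) * L) := Real.exp_le_exp.2 hexp
      _ = Real.exp (p * ε * Real.exp (-m) - p * Real.log ε) * τ ^ (-(1/2) : ℝ) := by
          rw [Real.exp_add, Real.rpow_def_of_pos hτ.1]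
          ring_nf
          rfl
  have hmajor : IntegrableOn (fun τ : ℝ =>
      Real.exp ((k/m) * (T/(2*(k/m)*m)) * Real.exp (-m) - (k/m) * Real.log (T/(2*(k/m)*m)))
        * τ ^ (-(1/2) : ℝ)) (Set.Ioo (0:ℝ) 1) := by
    have h1 : IntervalIntegrable (fun τ : ℝ => τ ^ (-(1/2) : ℝ)) volume 0 1 :=
      intervalIntegral.intervalIntegrable_rpow' (by norm_num)
    rw [intervalIntegrable_iff_integrableOn_Ioc_of_le (by norm_num)] at h1
    exact (h1.mono_set Set.Ioo_subset_Ioc_self).const_mul _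
  have hmeas : AEStronglyMeasurable g (volume.restrict (Set.Ioo (0:ℝ) 1)) := by
    have hGm : Measurable (fun τ : ℝ =>
        Real.exp ((k / m) * Real.log (Real.exp (-m) - m / T * Real.log τ))) := by
      measurability
    exact (hGm.aestronglyMeasurable).congr (by
      filter_upwards [ae_restrict_mem measurableSet_Ioo] with τ hτ
      exact (hgval τ (Set.Ioo_subset_Ioc_self hτ)).symm)
  have hIntg : IntegrableOn g (Set.Ioo (0:ℝ) 1) := by
    apply Integrable.mono' hmajor hmeas
    filter_upwards [ae_restrict_mem measurableSet_Ioo] with τ hτ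
    exact hdom τ hτ
  have hIntgIoc : IntegrableOn g (Set.Ioc (0:ℝ) 1) := by
    rwa [integrableOn_Ioc_iff_integrableOn_Ioo]
  refine ⟨hIntg, ?_⟩
  -- split the integral
  have hii1 : IntervalIntegrable g volume 0 τ₀ := by
    rw [intervalIntegrable_iff_integrableOn_Ioc_of_le hτ₀pos.le]
    exact hIntgIoc.mono_set (Set.Ioc_subset_Ioc_right hτ₀lt1.le)
  have hii2 : IntervalIntegrable g volume τ₀ 1 := by
    rw [intervalIntegrable_iff_integrableOn_Ioc_of_le hτ₀lt1.le]
    exact hIntgIoc.mono_set (Set.Ioc_subset_Ioc_left hτ₀pos.le)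
  have hsplit : (∫ τ in Set.Ioo (0:ℝ) 1, g τ)
      = (∫ τ in (0:ℝ)..τ₀, g τ) + ∫ τ in τ₀..(1:ℝ), g τ := by
    rw [← integral_Ioc_eq_integral_Ioo, ← intervalIntegral.integral_of_le (by norm_num : (0:ℝ) ≤ 1),
      ← intervalIntegral.integral_add_adjacent_intervals hii1 hii2]
  -- lower bound for the first piece
  have hlogτ₀ : Real.log τ₀ = -(A T) := Real.log_exp _
  have hJ1 : τ₀ ≤ ∫ τ in (0:ℝ)..τ₀, g τ := by
    rw [intervalIntegral.integral_of_le hτ₀pos.le]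
    have h1 : ∫ τ in Set.Ioc (0:ℝ) τ₀, (1:ℝ) ≤ ∫ τ in Set.Ioc (0:ℝ) τ₀, g τ := by
      apply setIntegral_mono_on
      · exact integrableOn_const (by simp [Real.volume_Ioc])
      · exact hIntgIoc.mono_set (Set.Ioc_subset_Ioc_right hτ₀lt1.le)
      · exact measurableSet_Ioc
      · intro τ hτ
        have hτ1 : τ ∈ Set.Ioc (0:ℝ) 1 := ⟨hτ.1, hτ.2.trans hτ₀lt1.le⟩
        rw [hg_def]
        simp only
        rw [hβ τ hτ1]
        apply Real.one_le_exp
        have hlog : Real.log τ ≤ -(A T) := by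
          rw [← hlogτ₀]
          exact Real.log_le_log hτ.1 hτ.2
        have harg : 1 ≤ Real.exp (-m) - m / T * Real.log τ := by
          have h2 : m / T * Real.log τ ≤ m / T * (-(A T)) :=
            mul_le_mul_of_nonneg_left hlog (by positivity)
          have h3 : m / T * (-(A T)) = -(1 - Real.exp (-m)) := by
            rw [mul_neg, hAT]
          rw [h3] at h2
          linarith
        have hlogarg : 0 ≤ Real.log (Real.exp (-m) - m / T * Real.log τ) :=
          Real.log_nonneg harg
        have heq : -(k * (-1 / m * Real.log (Real.exp (-m) - m / T * Real.log τ)))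
            = k / m * Real.log (Real.exp (-m) - m / T * Real.log τ) := by ring
        rw [heq]
        exact mul_nonneg (by positivity) hlogarg
    have h2 : ∫ τ in Set.Ioc (0:ℝ) τ₀, (1:ℝ) = τ₀ := by
      simp [Real.volume_Ioc, ENNReal.toReal_ofReal hτ₀pos.le, hτ₀pos.le]
    linarith
  -- substitution for the second piece
  set φ : ℝ → ℝ := fun t => Real.exp (A t - A T) with hφ_def
  have hφderiv : ∀ t, HasDerivAt φ (Real.exp (A t - A T) * f t) t := by
    intro t
    have := ((hA t).sub_const (A T)).exp
    simpa using this
  have hφmem : ∀ t ∈ Set.uIcc (0:ℝ) T, φ t ∈ Set.Ioc (0:ℝ) 1 := by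
    intro t ht
    rw [Set.uIcc_of_le hT.le] at ht
    constructor
    · exact Real.exp_pos _
    · rw [hφ_def]
      simp only
      rw [← Real.exp_zero]
      apply Real.exp_le_exp.2
      have h1 : Real.exp (-(m * T / T)) ≤ Real.exp (-(m * t / T)) := by
        apply Real.exp_le_exp.2
        have h0 : m * t / T ≤ m * T / T := by
          apply (div_le_div_iff_of_pos_right hT).2
          exact mul_le_mul_of_nonneg_left ht.2 hm.le
        linarith
      have h2 : A t - A T = (T / m) * (Real.exp (-(m * T / T)) - Real.exp (-(m * t / T))) := by
        simp only [hA_def]; ring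
      rw [h2]
      apply mul_nonpos_of_nonneg_of_nonpos (by positivity)
      linarith
  have hβφ : ∀ t ∈ Set.uIcc (0:ℝ) T, g (φ t) = Real.exp (-(k * (t / T))) := by
    intro t ht
    have hmem := hφmem t ht
    rw [hg_def]
    simp only
    rw [hβ _ hmem]
    congr 2
    have hlogφ : Real.log (φ t) = A t - A T := Real.log_exp _
    rw [hlogφ]
    have h1 : m / T * (A t - A T) = Real.exp (-m) - Real.exp (-(m * t / T)) := by
      have e1 : m / T * A t = 1 - Real.exp (-(m * t / T)) := by
        simp only [hA_def]
        field_simp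
      rw [mul_sub, e1, hAT]
      ring
    rw [h1]
    have h3 : Real.exp (-m) - (Real.exp (-m) - Real.exp (-(m * t / T)))
        = Real.exp (-(m * t / T)) := by ring
    rw [h3, Real.log_exp]
    field_simp
  have hφ0 : φ 0 = τ₀ := by simp [hφ_def, hA0, hτ₀_def]
  have hφT : φ T = 1 := by simp [hφ_def]
  have hsub : (∫ t in (0:ℝ)..T, (Real.exp (A t - A T) * f t) • (g ∘ φ) t)
      = ∫ u in (φ 0)..(φ T), g u := by
    apply intervalIntegral.integral_comp_smul_deriv'
    · intro t _; exact hφderiv t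
    · exact ((Real.continuous_exp.comp (hAcont.sub continuous_const)).mul hfcont).continuousOn
    · apply hgcont.mono
      intro u hu
      obtain ⟨t, ht, rfl⟩ := hu
      exact hφmem t ht
  have hJ2 : (∫ τ in τ₀..(1:ℝ), g τ)
      = ∫ t in (0:ℝ)..T, τ₀ * (Real.exp (A t) * f t * Real.exp (-(k * (t / T)))) := by
    rw [← hφ0, ← hφT, ← hsub]
    apply intervalIntegral.integral_congr
    intro t ht
    simp only [Function.comp, smul_eq_mul]
    rw [hβφ t ht]
    rw [Real.exp_sub]
    have hφ0' : φ 0 = (Real.exp (A T))⁻¹ := by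
      rw [hφ_def]; simp [hA0, Real.exp_neg]
    rw [hφ0', div_eq_mul_inv]
    ring
  -- pointwise comparison on [0, T]
  have hptwise : ∀ t ∈ Set.Icc (0:ℝ) T,
      Real.exp (A t) * f t * logistic k ≤
        Real.exp (A t) * f t * logistic (γ * N * t / T)
          + Real.exp (A t) * f t * Real.exp (-(k * (t / T))) := by
    intro t _
    have h1 : logistic k - logistic (γ * N * t / T) ≤ Real.exp (-(k * (t / T))) := by
      have h2 : 1 - logistic (γ * N * t / T) ≤ Real.exp (-(γ * N * t / T)) :=
        one_sub_logistic_le _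
      have h3 : -(γ * N * t / T) = -(k * (t / T)) := by rw [hk_def]; ring
      rw [h3] at h2
      linarith [logistic_lt_one k]
    have h4 : 0 ≤ Real.exp (A t) * f t := by positivity
    nlinarith
  have hiiσ : IntervalIntegrable (fun t => Real.exp (A t) * f t * logistic (γ * N * t / T))
      volume 0 T :=
    ((hEcont.mul hfcont).mul (continuous_logistic.comp
      ((continuous_const.mul continuous_id).div_const T))).intervalIntegrable _ _
  have hiig : IntervalIntegrable (fun t => Real.exp (A t) * f t * Real.exp (-(k * (t / T))))
      volume 0 T :=
    ((hEcont.mul hfcont).mul (Real.continuous_exp.comp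
      ((continuous_const.mul (continuous_id.div_const T)).neg))).intervalIntegrable _ _
  have hmono : (∫ t in (0:ℝ)..T, Real.exp (A t) * f t * logistic k)
      ≤ (∫ t in (0:ℝ)..T, Real.exp (A t) * f t * logistic (γ * N * t / T))
        + ∫ t in (0:ℝ)..T, Real.exp (A t) * f t * Real.exp (-(k * (t / T))) := by
    rw [← intervalIntegral.integral_add hiiσ hiig]
    apply intervalIntegral.integral_mono_on hT.le
    · exact ((hEcont.mul hfcont).mul continuous_const).intervalIntegrable _ _
    · exact hiiσ.add hiig
    · exact hptwise
  -- constant-multiple computations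
  have hconst1 : (∫ t in (0:ℝ)..T, Real.exp (A t) * f t * logistic k)
      = logistic k * ∫ t in (0:ℝ)..T, Real.exp (A t) * f t := by
    rw [← intervalIntegral.integral_const_mul]
    apply intervalIntegral.integral_congr
    intro t _
    ring
  have hconst2 : (∫ t in (0:ℝ)..T, τ₀ * (Real.exp (A t) * f t * Real.exp (-(k * (t / T)))))
      = τ₀ * ∫ t in (0:ℝ)..T, Real.exp (A t) * f t * Real.exp (-(k * (t / T))) :=
    intervalIntegral.integral_const_mul _ _
  -- final arithmetic
  set Iσ := ∫ t in (0:ℝ)..T, Real.exp (A t) * f t * logistic (γ * N * t / T) with hIσ_def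
  set Ig := ∫ t in (0:ℝ)..T, Real.exp (A t) * f t * Real.exp (-(k * (t / T))) with hIg_def
  set I1 := ∫ t in (0:ℝ)..T, Real.exp (A t) * f t with hI1_def
  have hτ₀ET : τ₀ * Real.exp (A T) = 1 := by
    rw [hτ₀_def, ← Real.exp_add]
    simp
  have hxT : x T = τ₀ * Iσ := by
    have h := key1
    rw [hx0, hA0] at h
    simp only [Real.exp_zero, zero_mul, sub_zero] at h
    rw [h]
    linear_combination (-(x T)) * hτ₀ET
  have hI1val : I1 = Real.exp (A T) - 1 := by
    rw [key2, hA0, Real.exp_zero]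
  have hσI1 : logistic k * I1 ≤ Iσ + Ig := by
    rw [← hconst1]
    exact hmono
  have hτ₀split : τ₀ + τ₀ * I1 = 1 := by
    rw [hI1val]
    linear_combination hτ₀ET
  have hσlt : logistic k * τ₀ < τ₀ :=
    (mul_lt_iff_lt_one_left hτ₀pos).2 (logistic_lt_one k)
  have hσeq : logistic k = logistic k * τ₀ + logistic k * (τ₀ * I1) := by
    linear_combination (-(logistic k)) * hτ₀split
  have hmul : logistic k * (τ₀ * I1) ≤ τ₀ * Iσ + τ₀ * Ig := by
    nlinarith [mul_le_mul_of_nonneg_left hσI1 hτ₀pos.le]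
  rw [hsplit, hJ2, hconst2]
  rw [hxT]
  linarith [hJ1, hσeq, hσlt, hmul]
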